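/- arXiv:2503.05688 — 2 statements merged into one kernel-verified Lean document; each statement's English description precedes it below -/
import Mathlib

section
/- Let P be a portrait, let 𝒯 be a B-marked stable tree, and let e be an edge of 𝒯 with half-edges h and h′. Then the B-marked tree 𝒯′ obtained by contracting e is again a B-marked stable tree, and for any P-decoration (ord, mon, cyc) of 𝒯, the induced triple (ord′, mon′, cyc′) on 𝒯′ is a P-decoration of 𝒯′ (it satisfies conditions (i)–(v)). -/
open scoped Classical

/-- A `B`-marked graph (with legs), in the half-edge formalism: a finite set `H` of
half-edges, a finite set `V` of vertices, an attachment map `base`, an involution `pair`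
whose 2-element orbits are the edges and whose fixed points are the legs, and a labelling
of the legs by `B`. -/
structure BMarkedGraph (B : Type) : Type 1 where
  /-- the half-edges -/
  H : Type
  /-- the vertices -/
  V : Type
  [fintH : Fintype H]
  [decH : DecidableEq H]
  [fintV : Fintype V]
  [decV : DecidableEq V]
  /-- the vertex a half-edge is attached to -/
  base : H → V
  /-- the edge-pairing involution; legs are exactly its fixed points -/
  pair : H → H
  pair_invol : ∀ h, pair (pair h) = h
  /-- the labelling of the legs by `B` -/
  leg : B → H
  leg_inj : Function.Injective leg
  pair_leg : ∀ b, pair (leg b) = leg b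
  leg_of_fixed : ∀ h, pair h = h → ∃ b, leg b = h

attribute [instance] BMarkedGraph.fintH BMarkedGraph.decH BMarkedGraph.fintV BMarkedGraph.decV

namespace BMarkedGraph

variable {B : Type} (T : BMarkedGraph B)

/-- Two vertices are adjacent if some edge joins them. -/
def Adj (v w : T.V) : Prop :=
  ∃ h, T.pair h ≠ h ∧ T.base h = v ∧ T.base (T.pair h) = w

/-- A `B`-marked graph is a stable tree if it has no self-loops, is connected, has exactly
one fewer edge than it has vertices (so that it is a tree), and every vertex has total
valence (incident edge half-edges plus legs) at least three. -/
def IsStableTree : Prop :=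
  (∀ h, T.pair h ≠ h → T.base (T.pair h) ≠ T.base h) ∧
  (∀ v w : T.V, Relation.ReflTransGen T.Adj v w) ∧
  (Fintype.card {h : T.H // T.pair h ≠ h} + 2 = 2 * Fintype.card T.V) ∧
  (∀ v : T.V, 3 ≤ Fintype.card {h : T.H // T.base h = v})

/-- Adjacency avoiding the vertex `v`. -/
def AdjAvoid (v x y : T.V) : Prop := x ≠ v ∧ y ≠ v ∧ T.Adj x y

/-- `T.InSide h k` says that the half-edge `k` lies in the connected component of
`T ∖ {base h}` containing `h`: either `k = h`, or `h` belongs to an edge and the base of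
`k` is reachable from the other endpoint of that edge without passing through `base h`. -/
def InSide (h k : T.H) : Prop :=
  k = h ∨ (T.pair h ≠ h ∧ k ≠ h ∧
    Relation.ReflTransGen (T.AdjAvoid (T.base h)) (T.base (T.pair h)) (T.base k))

end BMarkedGraph

/-- A portrait `P = (g, d, B, A, φ, br, rm)`: the combinatorial data prescribing the
branching behaviour of the branched covers under consideration.  Here `br b` is a
partition of `d` recorded as a multiset of positive parts summing to `d`. -/
structure Portrait (B A : Type) [Fintype B] [DecidableEq B] [Fintype A] [DecidableEq A] where
  /-- the source genus -/
  g : ℕ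
  /-- the degree -/
  d : ℕ
  d_pos : 1 ≤ d
  card_B : 3 ≤ Fintype.card B
  card_A : (2 : ℤ) - 2 * (g : ℤ) - (Fintype.card A : ℤ) < 0
  /-- the function on the source marks -/
  phi : A → B
  /-- the branch profiles of the target marks: partitions of `d` -/
  br : B → Multiset ℕ
  /-- the ramifications (local degrees) at the source marks -/
  rm : A → ℕ
  rm_pos : ∀ a, 1 ≤ rm a
  br_pos : ∀ b, ∀ n ∈ br b, 1 ≤ n
  br_sum : ∀ b, (br b).sum = d
  /-- the Riemann–Hurwitz formula -/
  riemannHurwitz :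
    (∑ b : B, ((d : ℤ) - ((br b).card : ℤ))) - 2 * (g : ℤ) = 2 * (d : ℤ) - 2
  /-- for each `b ∈ B`, `(rm a)_{a ∈ φ⁻¹ b}` is a sub-multiset of `br b` -/
  rm_sub : ∀ b : B, (Finset.univ.filter fun a => phi a = b).val.map rm ≤ br b

variable {B A : Type} [Fintype B] [DecidableEq B] [Fintype A] [DecidableEq A]

/-- The raw data `(ord, mon, cyc)` of a `P`-decoration of the `B`-marked graph `T`.
A cycle of a leg permutation is recorded by one of its points, so `cyc : A → Fin P.d`
sends `a` to a point of the cycle `cyc(a)` of `mon(φ a)`. -/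
structure PreDecoration (P : Portrait B A) (T : BMarkedGraph B) where
  /-- the cyclic orderings of the half-edges around the vertices -/
  ord : Equiv.Perm T.H
  /-- the permutation attached to each half-edge -/
  mon : T.H → Equiv.Perm (Fin P.d)
  /-- a point of the cycle labelled by each source mark -/
  cyc : A → Fin P.d

/-- `prodAlong ord mon h n = mon (ord^(n-1) h) * ⋯ * mon (ord h) * mon h`: the
right-to-left product of the permutations along `n` successive half-edges of the
`ord`-cycle starting at `h`. -/
def prodAlong {H : Type} {d : ℕ} (ord : Equiv.Perm H) (mon : H → Equiv.Perm (Fin d)) :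
    H → ℕ → Equiv.Perm (Fin d)
  | _, 0 => 1
  | h, n + 1 => prodAlong ord mon (ord h) n * mon h

/-- `(ord, mon, cyc)` is a `P`-decoration of `T`:  `ord` preserves the vertices and has
exactly one cycle for each vertex, consisting of all the half-edges incident with it;
(i) the cyclic product of the permutations around each vertex is the identity;
(ii) the permutations on the two half-edges of an edge are inverse;
(iii) each leg permutation `mon (leg b)` has cycle type `br b` (as a partition of `d`,
  fixed points included);
(iv) `cyc` is injective into the disjoint union of the cycles of the leg permutations,
  and the cycle of `mon (leg (φ a))` through `cyc a` has length `rm a`;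
(v) the leg permutations generate a transitive subgroup of `S_d`. -/
def IsDecoration (P : Portrait B A) (T : BMarkedGraph B) (D : PreDecoration P T) : Prop :=
  (∀ h, T.base (D.ord h) = T.base h) ∧
  (∀ h k, T.base h = T.base k → ∃ n : ℕ, (D.ord ^ n) h = k) ∧
  (∀ h (n : ℕ), (D.ord ^ n) h = h → prodAlong D.ord D.mon h n = 1) ∧
  (∀ h, T.pair h ≠ h → D.mon (T.pair h) = (D.mon h)⁻¹) ∧
  (∀ b, (Equiv.Perm.partition (D.mon (T.leg b))).parts = P.br b) ∧
  (∀ a a', P.phi a = P.phi a' →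
    (D.mon (T.leg (P.phi a))).SameCycle (D.cyc a) (D.cyc a') → a = a') ∧
  (∀ a, Function.minimalPeriod (⇑(D.mon (T.leg (P.phi a)))) (D.cyc a) = P.rm a) ∧
  (∀ i j : Fin P.d, ∃ π ∈ Subgroup.closure (Set.range fun b => D.mon (T.leg b)), π i = j)

/-- Global conjugation of a decoration by `τ ∈ S_d`. -/
def globalConj {P : Portrait B A} {T : BMarkedGraph B} (τ : Equiv.Perm (Fin P.d))
    (D : PreDecoration P T) : PreDecoration P T where
  ord := D.ord
  mon := fun h => τ * D.mon h * τ⁻¹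
  cyc := fun a => τ (D.cyc a)

/-- The anticlockwise braid move at the half-edge `h`: with `h̃ = ord h`, the half-edge
`h` is shifted one step anticlockwise through `h̃`, and the permutations and cycle labels
on the component of `T ∖ {base h}` containing `h` are conjugated by `mon h̃`. -/
noncomputable def braidACW {P : Portrait B A} {T : BMarkedGraph B}
    (D : PreDecoration P T) (h : T.H) : PreDecoration P T where
  ord := Equiv.swap h (D.ord h) * D.ord * (Equiv.swap h (D.ord h))⁻¹
  mon := fun k =>
    if T.InSide h k then D.mon (D.ord h) * D.mon k * (D.mon (D.ord h))⁻¹ else D.mon k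
  cyc := fun a =>
    if T.InSide h (T.leg (P.phi a)) then D.mon (D.ord h) (D.cyc a) else D.cyc a

/-- The clockwise braid move at the half-edge `h`: with `h̃ = ord⁻¹ h`, the half-edge
`h` is shifted one step clockwise through `h̃`, and the permutations and cycle labels
on the component of `T ∖ {base h}` containing `h` are conjugated by `(mon h̃)⁻¹`. -/
noncomputable def braidCW {P : Portrait B A} {T : BMarkedGraph B}
    (D : PreDecoration P T) (h : T.H) : PreDecoration P T where
  ord := Equiv.swap h (D.ord⁻¹ h) * D.ord * (Equiv.swap h (D.ord⁻¹ h))⁻¹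
  mon := fun k =>
    if T.InSide h k then (D.mon (D.ord⁻¹ h))⁻¹ * D.mon k * D.mon (D.ord⁻¹ h) else D.mon k
  cyc := fun a =>
    if T.InSide h (T.leg (P.phi a)) then (D.mon (D.ord⁻¹ h))⁻¹ (D.cyc a) else D.cyc a
/-- Witness data exhibiting the `B`-marked graph `T'` as the contraction of `T` along the
edge `{h₀, pair h₀}`: the half-edges of `T'` are identified (by `q`, compatibly with the
pairing and the leg labels) with those of `T` other than `h₀` and `pair h₀`, and the
vertices of `T'` are identified (by `p`) with those of `T` with the two endpoints of the
contracted edge merged. -/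
structure ContractionData {B : Type} (T T' : BMarkedGraph B) (h₀ : T.H) where
  edge : T.pair h₀ ≠ h₀
  q : T'.H → T.H
  q_inj : Function.Injective q
  q_range : Set.range q = {k : T.H | k ≠ h₀ ∧ k ≠ T.pair h₀}
  q_pair : ∀ k, q (T'.pair k) = T.pair (q k)
  q_leg : ∀ b, q (T'.leg b) = T.leg b
  p : T.V → T'.V
  p_surj : Function.Surjective p
  p_eq_iff : ∀ v w, p v = p w ↔
    (v = w ∨ ({v, w} : Set T.V) = {T.base h₀, T.base (T.pair h₀)})
  p_base : ∀ k, T'.base k = p (T.base (q k))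

/-- `D'` is the decoration of the contracted tree `T'` induced by the decoration `D` of
`T`: `mon` and `cyc` are the restrictions of those of `D`, and the two `ord`-cycles at the
endpoints of the contracted edge are merged:
 `(h₀ h₁ … h_k)(h₀' h₁' … h_l') ↦ (h₁ … h_k h₁' … h_l')` where `h₀' = pair h₀`. -/
def IsContractedDecoration {P : Portrait B A} {T T' : BMarkedGraph B} {h₀ : T.H}
    (c : ContractionData T T' h₀) (D : PreDecoration P T) (D' : PreDecoration P T') :
    Prop :=
  (∀ k, D'.mon k = D.mon (c.q k)) ∧
  (∀ a, D'.cyc a = D.cyc a) ∧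
  (∀ k, c.q (D'.ord k) =
    if D.ord (c.q k) = h₀ then D.ord (T.pair h₀)
    else if D.ord (c.q k) = T.pair h₀ then D.ord h₀
    else D.ord (c.q k))



section Counting
variable {H V : Type} [Fintype H] [Fintype V] [DecidableEq H] [DecidableEq V]

/-- One step of adjacency in a half-edge graph. -/
def stepRel (base : H → V) (pr : H → H) (x y : V) : Prop :=
  ∃ h, pr h ≠ h ∧ base h = x ∧ base (pr h) = y

def reachN (r : V → V → Prop) : ℕ → V → V → Prop
  | 0, v, w => v = w
  | n+1, v, w => ∃ u, r v u ∧ reachN r n u w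

lemma reachN_tail {r : V → V → Prop} :
    ∀ {n : ℕ} {v u w : V}, reachN r n v u → r u w → reachN r (n+1) v w
  | 0, v, u, w, h, h2 => ⟨w, h ▸ h2, rfl⟩
  | n+1, _, _, w, ⟨x, hx, h⟩, h2 => ⟨x, hx, reachN_tail h h2⟩

lemma exists_reachN {r : V → V → Prop} {v w : V} (h : Relation.ReflTransGen r v w) :
    ∃ n, reachN r n v w := by
  induction h with
  | refl => exact ⟨0, rfl⟩
  | tail _ h2 ih => obtain ⟨n, hn⟩ := ih; exact ⟨n+1, reachN_tail hn h2⟩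

lemma two_mul_card_le (base : H → V) (pr : H → H) (hinv : ∀ h, pr (pr h) = h)
    (conn : ∀ v w, Relation.ReflTransGen (stepRel base pr) v w) :
    2 * Fintype.card V ≤ Fintype.card {h // pr h ≠ h} + 2 := by
  rcases isEmpty_or_nonempty V with hV | hV
  · simp [Fintype.card_eq_zero]
  obtain ⟨v₀⟩ := hV
  have ex : ∀ v, ∃ n, reachN (stepRel base pr) n v v₀ := fun v => exists_reachN (conn v v₀)
  have key : ∀ v, v ≠ v₀ → ∃ h, pr h ≠ h ∧ base h = v ∧
      Nat.find (ex (base (pr h))) < Nat.find (ex v) := by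
    intro v hv
    have h0 : Nat.find (ex v) ≠ 0 := by
      intro h0
      exact hv ((Nat.find_eq_zero (ex v)).mp h0)
    obtain ⟨m, hm⟩ := Nat.exists_eq_succ_of_ne_zero h0
    have hs := Nat.find_spec (ex v)
    rw [hm] at hs
    obtain ⟨u, ⟨h, hne, hb, hb'⟩, hreach⟩ := hs
    refine ⟨h, hne, hb, ?_⟩
    have : Nat.find (ex (base (pr h))) ≤ m := Nat.find_le (hb' ▸ hreach)
    omega
  choose f hf1 hf2 hf3 using key
  let F : {v // v ≠ v₀} ⊕ {v // v ≠ v₀} → {h // pr h ≠ h} := fun x =>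
    match x with
    | .inl v => ⟨f v.1 v.2, hf1 v.1 v.2⟩
    | .inr v => ⟨pr (f v.1 v.2), by rw [hinv]; exact fun e => hf1 v.1 v.2 e.symm⟩
  have prinj : Function.Injective pr := Function.LeftInverse.injective hinv
  have Finj : Function.Injective F := by
    rintro (v | v) (w | w) e <;> simp only [F, Subtype.mk.injEq] at e
    · have : v = w := Subtype.ext (by rw [← hf2 v.1 v.2, ← hf2 w.1 w.2, e])
      rw [this]
    · exfalso
      have e1 : base (f v.1 v.2) = v.1 := hf2 v.1 v.2
      have e2 : base (pr (f v.1 v.2)) = base (f w.1 w.2) := by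
        rw [e, hinv]
      have l1 := hf3 v.1 v.2
      have l2 := hf3 w.1 w.2
      rw [e2, hf2 w.1 w.2] at l1
      have : base (pr (f w.1 w.2)) = v.1 := by rw [← e, e1]
      rw [this] at l2
      omega
    · exfalso
      have e1 : base (f w.1 w.2) = w.1 := hf2 w.1 w.2
      have e2 : base (pr (f w.1 w.2)) = base (f v.1 v.2) := by
        rw [← e, hinv]
      have l1 := hf3 w.1 w.2
      have l2 := hf3 v.1 v.2
      rw [e2, hf2 v.1 v.2] at l1
      have : base (pr (f v.1 v.2)) = w.1 := by rw [e, e1]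
      rw [this] at l2
      omega
    · have : v = w := Subtype.ext (by rw [← hf2 v.1 v.2, ← hf2 w.1 w.2, prinj e])
      rw [this]
  have hcard := Fintype.card_le_of_injective F Finj
  rw [Fintype.card_sum] at hcard
  have hsub : Fintype.card {v // v ≠ v₀} = Fintype.card V - 1 := by
    have := Fintype.card_subtype_compl (fun v : V => v = v₀)
    rw [Fintype.card_subtype_eq] at this
    exact this
  have hpos : 1 ≤ Fintype.card V := Fintype.card_pos_iff.mpr ⟨v₀⟩
  omega

end Counting

section PA
variable {H : Type} {d : ℕ} (ord : Equiv.Perm H) (mon : H → Equiv.Perm (Fin d))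

lemma prodAlong_add (m n : ℕ) : ∀ h, prodAlong ord mon h (m + n) =
    prodAlong ord mon ((ord ^ m) h) n * prodAlong ord mon h m := by
  induction m with
  | zero => intro h; simp [prodAlong]
  | succ m ih =>
    intro h
    rw [show m + 1 + n = (m + n) + 1 from by omega]
    show prodAlong ord mon (ord h) (m + n) * mon h = _
    rw [ih (ord h)]
    have e : (ord ^ m) (ord h) = (ord ^ (m+1)) h := by
      rw [pow_succ, Equiv.Perm.mul_apply]
    rw [e, mul_assoc]
    rfl

lemma prodAlong_front (h : H) (n : ℕ) :
    prodAlong ord mon h (n + 1) = mon ((ord ^ n) h) * prodAlong ord mon h n := by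
  rw [prodAlong_add ord mon n 1 h]
  simp [prodAlong]

lemma prodAlong_telescope (Φ : H → Equiv.Perm (Fin d))
    (hΦ : ∀ h, mon h = Φ (ord h) * (Φ h)⁻¹) :
    ∀ (n : ℕ) (h : H), prodAlong ord mon h n = Φ ((ord ^ n) h) * (Φ h)⁻¹ := by
  intro n
  induction n with
  | zero => intro h; simp [prodAlong]
  | succ n ih =>
    intro h
    show prodAlong ord mon (ord h) n * mon h = _
    rw [ih (ord h), hΦ h]
    have e : (ord ^ n) (ord h) = (ord ^ (n+1)) h := by
      rw [pow_succ, Equiv.Perm.mul_apply]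
    rw [e, mul_assoc, inv_mul_cancel_left]

lemma prodAlong_eq_of_eq (hprod : ∀ (h : H) (n : ℕ), (ord ^ n) h = h → prodAlong ord mon h n = 1)
    {h : H} {m n : ℕ} (hle : m ≤ n) (he : (ord ^ m) h = (ord ^ n) h) :
    prodAlong ord mon h m = prodAlong ord mon h n := by
  obtain ⟨t, rfl⟩ := Nat.exists_eq_add_of_le hle
  rw [prodAlong_add ord mon m t h]
  have : (ord ^ t) ((ord ^ m) h) = (ord ^ m) h := by
    rw [← Equiv.Perm.mul_apply, ← pow_add, add_comm t m, ← he]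
  rw [hprod _ t this, one_mul]

end PA

section Cyc
variable {H : Type} [Fintype H] [DecidableEq H]

lemma cyc_shift (ord : Equiv.Perm H) (a x : H) :
    (∃ n : ℕ, (ord ^ n) a = ord x) ↔ (∃ n : ℕ, (ord ^ n) a = x) := by
  constructor
  · rintro ⟨n, hn⟩
    refine ⟨orderOf ord - 1 + n, ?_⟩
    have hpos : 0 < orderOf ord := orderOf_pos ord
    rw [pow_add, Equiv.Perm.mul_apply, hn, ← Equiv.Perm.mul_apply, ← pow_succ,
      Nat.sub_add_cancel hpos, pow_orderOf_eq_one]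
    rfl
  · rintro ⟨n, hn⟩
    exact ⟨n + 1, by rw [pow_succ', Equiv.Perm.mul_apply, hn]⟩

/-- The "same cycle in the future" setoid of a permutation of a finite type. -/
def cycSetoid (ord : Equiv.Perm H) : Setoid H where
  r a b := ∃ n : ℕ, (ord ^ n) a = b
  iseqv := by
    constructor
    · exact fun a => ⟨0, rfl⟩
    · rintro a b ⟨n, rfl⟩
      refine ⟨n * (orderOf ord - 1), ?_⟩
      rw [← Equiv.Perm.mul_apply, ← pow_add]
      have hpos : 0 < orderOf ord := orderOf_pos ord
      have : n * (orderOf ord - 1) + n = orderOf ord * n := by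
        rcases Nat.exists_eq_succ_of_ne_zero hpos.ne' with ⟨k, hk⟩
        rw [hk]
        simp [Nat.mul_succ, Nat.succ_mul, Nat.mul_comm]
      rw [this, pow_mul, pow_orderOf_eq_one, one_pow]
      rfl
    · rintro a b c ⟨m, rfl⟩ ⟨n, rfl⟩
      exact ⟨m + n, by rw [add_comm, pow_add, Equiv.Perm.mul_apply]⟩

/-- A canonical representative on each cycle of `ord`. -/
noncomputable def repFun (ord : Equiv.Perm H) (x : H) : H :=
  (Quotient.mk (cycSetoid ord) x).out

lemma repFun_ex (ord : Equiv.Perm H) (x : H) :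
    ∃ n : ℕ, (ord ^ n) (repFun ord x) = x :=
  Quotient.mk_out (s := cycSetoid ord) x

lemma repFun_ord (ord : Equiv.Perm H) (x : H) : repFun ord (ord x) = repFun ord x := by
  unfold repFun
  congr 1
  exact Quotient.sound (s := cycSetoid ord) ((cycSetoid ord).iseqv.symm ⟨1, by rw [pow_one]⟩)

/-- Partial products of `mon` along the `ord`-cycles, from the canonical representative. -/
noncomputable def PsiFun {d : ℕ} (ord : Equiv.Perm H) (mon : H → Equiv.Perm (Fin d)) (x : H) :
    Equiv.Perm (Fin d) :=
  prodAlong ord mon (repFun ord x) (Nat.find (repFun_ex ord x))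

lemma PsiFun_step {d : ℕ} (ord : Equiv.Perm H) (mon : H → Equiv.Perm (Fin d))
    (hprod : ∀ (h : H) (n : ℕ), (ord ^ n) h = h → prodAlong ord mon h n = 1) (x : H) :
    PsiFun ord mon (ord x) = mon x * PsiFun ord mon x := by
  have s1 := Nat.find_spec (repFun_ex ord (ord x))
  have s2 := Nat.find_spec (repFun_ex ord x)
  set n₁ := Nat.find (repFun_ex ord (ord x)) with hn₁
  set n₂ := Nat.find (repFun_ex ord x) with hn₂
  rw [repFun_ord] at s1
  have key : (ord ^ n₁) (repFun ord x) = (ord ^ (n₂ + 1)) (repFun ord x) := by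
    rw [pow_succ', Equiv.Perm.mul_apply, s2, s1]
  have e1 : PsiFun ord mon (ord x) = prodAlong ord mon (repFun ord x) n₁ := by
    unfold PsiFun
    rw [← hn₁, repFun_ord]
  rw [e1]
  rcases le_total n₁ (n₂ + 1) with hle | hle
  · rw [prodAlong_eq_of_eq ord mon hprod hle key, prodAlong_front, s2]
    rfl
  · rw [← prodAlong_eq_of_eq ord mon hprod hle key.symm, prodAlong_front, s2]
    rfl


section NoParallel
variable {B : Type}

/-- In a connected graph with `#V - 1` edges there is no edge parallel to the edge
`{h₀, pair h₀}`. -/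
lemma BMarkedGraph.no_parallel (T : BMarkedGraph B)
    (hconn : ∀ v w : T.V, Relation.ReflTransGen T.Adj v w)
    (hcount : Fintype.card {h : T.H // T.pair h ≠ h} + 2 = 2 * Fintype.card T.V)
    (h₀ x : T.H) (hEdge : T.pair h₀ ≠ h₀) (hx : T.pair x ≠ x)
    (hx0 : x ≠ h₀) (hx0' : x ≠ T.pair h₀)
    (hcase : (T.base x = T.base h₀ ∧ T.base (T.pair x) = T.base (T.pair h₀)) ∨
             (T.base x = T.base (T.pair h₀) ∧ T.base (T.pair x) = T.base h₀)) : False := by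
  set pr' : T.H → T.H := fun y => if y = x ∨ y = T.pair x then y else T.pair y with hpr'
  have hx1 : T.pair x ≠ h₀ := fun e => hx0' (by rw [← T.pair_invol x, e])
  have hx2 : T.pair x ≠ T.pair h₀ := fun e => hx0 (by
    have := congrArg T.pair e
    rwa [T.pair_invol, T.pair_invol] at this)
  have prne : ∀ y, ¬(y = x ∨ y = T.pair x) → pr' y = T.pair y := by
    intro y hy
    rw [hpr']
    simp only
    rw [if_neg hy]
  have hinv' : ∀ y, pr' (pr' y) = y := by
    intro y
    by_cases hy : y = x ∨ y = T.pair x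
    · simp [hpr', if_pos hy]
    · rw [prne y hy]
      have h2 : ¬(T.pair y = x ∨ T.pair y = T.pair x) := by
        push_neg at hy ⊢
        constructor
        · intro e
          exact hy.2 (by rw [← T.pair_invol y, e])
        · intro e
          apply hy.1
          have := congrArg T.pair e
          rwa [T.pair_invol, T.pair_invol] at this
      rw [prne _ h2, T.pair_invol]
  have e0 : pr' h₀ = T.pair h₀ := by
    apply prne
    push_neg
    exact ⟨fun e => hx0 e.symm, fun e => hx1 e.symm⟩
  have e1 : pr' (T.pair h₀) = h₀ := by
    have h2 : ¬(T.pair h₀ = x ∨ T.pair h₀ = T.pair x) := by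
      push_neg
      exact ⟨fun e => hx0' e.symm, fun e => hx2 e.symm⟩
    rw [prne _ h2, T.pair_invol]
  have hstep : ∀ a b, T.Adj a b → stepRel T.base pr' a b := by
    rintro a b ⟨h, hne, hba, hbb⟩
    by_cases hh : h = x ∨ h = T.pair x
    · rcases hh with rfl | rfl
      · rcases hcase with ⟨c1, c2⟩ | ⟨c1, c2⟩
        · exact ⟨h₀, by rw [e0]; exact hEdge, by rw [← c1]; exact hba,
            by rw [e0, ← c2]; exact hbb⟩
        · exact ⟨T.pair h₀, by rw [e1]; exact Ne.symm hEdge, by rw [← c1]; exact hba,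
            by rw [e1, ← c2]; exact hbb⟩
      · rw [T.pair_invol] at hbb
        rcases hcase with ⟨c1, c2⟩ | ⟨c1, c2⟩
        · exact ⟨T.pair h₀, by rw [e1]; exact Ne.symm hEdge, by rw [← c2]; exact hba,
            by rw [e1, ← c1]; exact hbb⟩
        · exact ⟨h₀, by rw [e0]; exact hEdge, by rw [← c2]; exact hba,
            by rw [e0, ← c1]; exact hbb⟩
    · exact ⟨h, by rw [prne _ hh]; exact hne, hba, by rw [prne _ hh]; exact hbb⟩
  have conn' : ∀ v w, Relation.ReflTransGen (stepRel T.base pr') v w :=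
    fun v w => Relation.ReflTransGen.mono hstep v w (hconn v w)
  have hcl := two_mul_card_le T.base pr' hinv' conn'
  have hset : (Finset.univ.filter fun y => pr' y ≠ y) =
      (Finset.univ.filter fun y : T.H => T.pair y ≠ y) \ {x, T.pair x} := by
    ext y
    simp only [Finset.mem_filter, Finset.mem_univ, true_and, Finset.mem_sdiff,
      Finset.mem_insert, Finset.mem_singleton]
    by_cases hy : y = x ∨ y = T.pair x
    · simp only [hpr']
      simp only [if_pos hy]
      simp [hy]
    · rw [prne _ hy]
      push_neg at hy
      simp [hy.1, hy.2]
  have hsub2 : ({x, T.pair x} : Finset T.H) ⊆ Finset.univ.filter fun y : T.H => T.pair y ≠ y := by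
    intro y hy
    simp only [Finset.mem_insert, Finset.mem_singleton] at hy
    rcases hy with rfl | rfl
    · simp [hx]
    · simp only [Finset.mem_filter, Finset.mem_univ, true_and]
      rw [T.pair_invol]
      exact Ne.symm hx
  have hc1 : Fintype.card {h : T.H // pr' h ≠ h} =
      (Finset.univ.filter fun y : T.H => T.pair y ≠ y).card - 2 := by
    rw [Fintype.card_subtype, hset, Finset.card_sdiff_of_subset hsub2, Finset.card_pair (Ne.symm hx)]
  have hc2 : 2 ≤ (Finset.univ.filter fun y : T.H => T.pair y ≠ y).card := by
    calc 2 = ({x, T.pair x} : Finset T.H).card := (Finset.card_pair (Ne.symm hx)).symm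
    _ ≤ _ := Finset.card_le_card hsub2
  have hc3 : Fintype.card {h : T.H // T.pair h ≠ h} =
      (Finset.univ.filter fun y : T.H => T.pair y ≠ y).card := Fintype.card_subtype _
  omega

/-- The successor map of the merged cyclic order. -/
def nextH (T : BMarkedGraph B) (ord : Equiv.Perm T.H) (h₀ : T.H) (x : T.H) : T.H :=
  if ord x = h₀ then ord (T.pair h₀) else if ord x = T.pair h₀ then ord h₀ else ord x

lemma base_ord_pow {T : BMarkedGraph B} {ord : Equiv.Perm T.H}
    (h1 : ∀ h, T.base (ord h) = T.base h) :
    ∀ (n : ℕ) (h : T.H), T.base ((ord ^ n) h) = T.base h := by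
  intro n
  induction n with
  | zero => intro h; simp
  | succ n ih =>
    intro h
    rw [pow_succ, Equiv.Perm.mul_apply, ih, h1]

lemma ord_ne_self {T : BMarkedGraph B} {ord : Equiv.Perm T.H}
    (hval : ∀ v : T.V, 3 ≤ Fintype.card {h : T.H // T.base h = v})
    (h2 : ∀ h k : T.H, T.base h = T.base k → ∃ n : ℕ, (ord ^ n) h = k) (h : T.H) :
    ord h ≠ h := by
  intro he
  have h3 : 1 < Fintype.card {k : T.H // T.base k = T.base h} :=
    lt_of_lt_of_le (by norm_num) (hval (T.base h))
  obtain ⟨⟨k, hk⟩, hne⟩ := Fintype.exists_ne_of_one_lt_card h3 ⟨h, rfl⟩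
  obtain ⟨n, hn⟩ := h2 h k hk.symm
  have hfix : ∀ m : ℕ, (ord ^ m) h = h := by
    intro m
    induction m with
    | zero => rfl
    | succ m ih => rw [pow_succ, Equiv.Perm.mul_apply, he, ih]
  have : k = h := by rw [← hn, hfix n]
  exact hne (Subtype.ext this)

end NoParallel

section Contract
variable {B : Type}

variable {B : Type}

/-- The contraction of the edge `{h₀, pair h₀}` of `T`. -/
noncomputable def contractedGraph (T : BMarkedGraph B) (h₀ : T.H)
    (hEdge : T.pair h₀ ≠ h₀) (hb01 : T.base (T.pair h₀) ≠ T.base h₀) : BMarkedGraph B where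
  H := {k : T.H // k ≠ h₀ ∧ k ≠ T.pair h₀}
  V := {v : T.V // v ≠ T.base (T.pair h₀)}
  base k := if hv : T.base k.1 = T.base (T.pair h₀) then ⟨T.base h₀, fun e => hb01 e.symm⟩
    else ⟨T.base k.1, hv⟩
  pair k := ⟨T.pair k.1, by
      intro e
      exact k.2.2 (by rw [← T.pair_invol k.1, e]), by
      intro e
      have := congrArg T.pair e
      rw [T.pair_invol, T.pair_invol] at this
      exact k.2.1 this⟩
  pair_invol k := Subtype.ext (T.pair_invol k.1)
  leg b := ⟨T.leg b, by
      intro e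
      apply hEdge
      rw [← e, T.pair_leg], by
      intro e
      have h2 := T.pair_leg b
      rw [e, T.pair_invol] at h2
      exact hEdge h2.symm⟩
  leg_inj a b e := T.leg_inj (congrArg Subtype.val e)
  pair_leg b := Subtype.ext (T.pair_leg b)
  leg_of_fixed k hk := by
    obtain ⟨b, hb⟩ := T.leg_of_fixed k.1 (congrArg Subtype.val hk)
    exact ⟨b, Subtype.ext hb⟩

/-- The canonical contraction data for `contractedGraph`. -/
noncomputable def contractedData (T : BMarkedGraph B) (h₀ : T.H)
    (hEdge : T.pair h₀ ≠ h₀) (hb01 : T.base (T.pair h₀) ≠ T.base h₀) :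
    ContractionData T (contractedGraph T h₀ hEdge hb01) h₀ where
  edge := hEdge
  q := Subtype.val
  q_inj := Subtype.val_injective
  q_range := Subtype.range_val
  q_pair _ := rfl
  q_leg _ := rfl
  p v := if hv : v = T.base (T.pair h₀) then ⟨T.base h₀, fun e => hb01 e.symm⟩ else ⟨v, hv⟩
  p_surj := by
    rintro ⟨v, hv⟩
    exact ⟨v, dif_neg hv⟩
  p_eq_iff := by
    intro v w
    rw [Set.pair_eq_pair_iff]
    by_cases hv : v = T.base (T.pair h₀) <;> by_cases hw : w = T.base (T.pair h₀)
    · subst hv; subst hw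
      simp
      rfl
    · subst hv
      beta_reduce
      dsimp only [contractedGraph]
      rw [dif_pos rfl, dif_neg hw]
      constructor
      · intro e
        exact Or.inr (Or.inr ⟨rfl, (congrArg Subtype.val e).symm⟩)
      · rintro (e | ⟨e1, e2⟩ | ⟨e1, e2⟩)
        · exact absurd e.symm hw
        · exact absurd e2 hw
        · exact Subtype.ext e2.symm
    · subst hw
      beta_reduce
      dsimp only [contractedGraph]
      rw [dif_neg hv, dif_pos rfl]
      constructor
      · intro e
        exact Or.inr (Or.inl ⟨congrArg Subtype.val e, rfl⟩)
      · rintro (e | ⟨e1, e2⟩ | ⟨e1, e2⟩)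
        · exact absurd e hv
        · exact Subtype.ext e1
        · exact absurd e1 hv
    · beta_reduce
      dsimp only [contractedGraph]
      rw [dif_neg hv, dif_neg hw]
      constructor
      · exact fun e => Or.inl (congrArg Subtype.val e)
      · rintro (e | ⟨e1, e2⟩ | ⟨e1, e2⟩)
        · exact Subtype.ext e
        · exact absurd e2 hw
        · exact absurd e1 hv
  p_base k := rfl


end Contract

/-- Contracting an edge `{h₀, pair h₀}` of a `B`-marked stable tree
yields a `B`-marked stable tree, and any `P`-decoration induces a `P`-decoration of the
contracted tree. -/
theorem contraction_isStableTree_and_isDecoration (P : Portrait B A)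
    (T : BMarkedGraph B) (hT : T.IsStableTree) (h₀ : T.H) (hEdge : T.pair h₀ ≠ h₀) :
    (∃ T' : BMarkedGraph B, Nonempty (ContractionData T T' h₀)) ∧
    (∀ (T' : BMarkedGraph B) (c : ContractionData T T' h₀),
      T'.IsStableTree ∧
      (∀ D : PreDecoration P T, IsDecoration P T D →
        ∃ D' : PreDecoration P T', IsContractedDecoration c D D') ∧
      (∀ (D : PreDecoration P T) (D' : PreDecoration P T'),
        IsDecoration P T D → IsContractedDecoration c D D' →
        IsDecoration P T' D')) := by
  obtain ⟨hloop, hconn, hcount, hval⟩ := hT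
  have hb01 : T.base (T.pair h₀) ≠ T.base h₀ := hloop h₀ hEdge
  refine ⟨⟨contractedGraph T h₀ hEdge hb01, ⟨contractedData T h₀ hEdge hb01⟩⟩, ?_⟩
  intro T' c
  have hq1 : ∀ k, c.q k ≠ h₀ ∧ c.q k ≠ T.pair h₀ := by
    intro k
    have hm : c.q k ∈ Set.range c.q := Set.mem_range_self k
    rw [c.q_range] at hm
    exact hm
  have hqex : ∀ x : T.H, x ≠ h₀ → x ≠ T.pair h₀ → ∃ k, c.q k = x := by
    intro x h1 h2
    have hm : x ∈ Set.range c.q := by rw [c.q_range]; exact ⟨h1, h2⟩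
    exact hm
  have hpair_ne : ∀ k, T'.pair k ≠ k ↔ T.pair (c.q k) ≠ c.q k := by
    intro k
    constructor
    · intro hk e
      exact hk (c.q_inj (by rw [c.q_pair, e]))
    · intro hk e
      exact hk (by rw [← c.q_pair, e])
  have hp01 : c.p (T.base (T.pair h₀)) = c.p (T.base h₀) :=
    (c.p_eq_iff _ _).mpr (Or.inr (Set.pair_comm _ _))
  have hpv : ∀ v, c.p v = c.p (T.base h₀) ↔ (v = T.base h₀ ∨ v = T.base (T.pair h₀)) := by
    intro v
    rw [c.p_eq_iff, Set.pair_eq_pair_iff]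
    constructor
    · rintro (e | ⟨e1, e2⟩ | ⟨e1, e2⟩)
      · exact Or.inl e
      · exact Or.inl e1
      · exact Or.inr e1
    · rintro (rfl | rfl)
      · exact Or.inl rfl
      · exact Or.inr (Or.inr ⟨rfl, rfl⟩)
  refine ⟨⟨?_, ?_, ?_, ?_⟩, ?_, ?_⟩
  · -- no self-loops
    intro k hk heq
    have hx : T.pair (c.q k) ≠ c.q k := (hpair_ne k).mp hk
    rw [c.p_base, c.p_base, c.q_pair] at heq
    rcases (c.p_eq_iff _ _).mp heq with e | e
    · exact hloop (c.q k) hx e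
    · rw [Set.pair_eq_pair_iff] at e
      refine T.no_parallel hconn hcount h₀ (c.q k) hEdge hx (hq1 k).1 (hq1 k).2 ?_
      rcases e with ⟨e1, e2⟩ | ⟨e1, e2⟩
      · exact Or.inr ⟨e2, e1⟩
      · exact Or.inl ⟨e2, e1⟩
  · -- connectivity
    have lift : ∀ v w : T.V, Relation.ReflTransGen T.Adj v w →
        Relation.ReflTransGen T'.Adj (c.p v) (c.p w) := by
      intro v w h
      induction h with
      | refl => exact Relation.ReflTransGen.refl
      | @tail u w' h1 hadj ih =>
        obtain ⟨h, hne, hu, hw⟩ := hadj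
        by_cases hh : h = h₀ ∨ h = T.pair h₀
        · have heq : c.p u = c.p w' := by
            apply (c.p_eq_iff _ _).mpr
            rcases hh with rfl | rfl
            · exact Or.inr (by rw [← hu, ← hw])
            · refine Or.inr ?_
              rw [← hu, ← hw, T.pair_invol]
              exact Set.pair_comm _ _
          exact heq ▸ ih
        · push_neg at hh
          obtain ⟨k, hkq⟩ := hqex h hh.1 hh.2
          refine Relation.ReflTransGen.tail ih ⟨k, ?_, ?_, ?_⟩
          · rw [hpair_ne, hkq]; exact hne
          · rw [c.p_base, hkq, hu]
          · rw [c.p_base, c.q_pair, hkq, hw]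
    intro v' w'
    obtain ⟨v, rfl⟩ := c.p_surj v'
    obtain ⟨w, rfl⟩ := c.p_surj w'
    exact lift v w (hconn v w)
  · -- edge count
    have hVcard : Fintype.card T'.V = Fintype.card T.V - 1 := by
      have hbij : Function.Bijective
          (fun v : {v : T.V // v ≠ T.base (T.pair h₀)} => c.p v.1) := by
        constructor
        · rintro ⟨v, hv⟩ ⟨w, hw⟩ e
          rcases (c.p_eq_iff _ _).mp e with e1 | e1
          · exact Subtype.ext e1
          · rw [Set.pair_eq_pair_iff] at e1
            rcases e1 with ⟨e1, e2⟩ | ⟨e1, e2⟩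
            · exact absurd e2 hw
            · exact absurd e1 hv
        · intro v'
          obtain ⟨v, rfl⟩ := c.p_surj v'
          by_cases hv : v = T.base (T.pair h₀)
          · subst hv
            exact ⟨⟨T.base h₀, fun e => hb01 e.symm⟩, hp01.symm⟩
          · exact ⟨⟨v, hv⟩, rfl⟩
      have hcb := Fintype.card_of_bijective hbij
      have hcompl : Fintype.card {v : T.V // v ≠ T.base (T.pair h₀)} =
          Fintype.card T.V - 1 := by
        have h2 := Fintype.card_subtype_compl (fun v : T.V => v = T.base (T.pair h₀))
        rw [Fintype.card_subtype_eq] at h2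
        exact h2
      omega
    have hEcard : Fintype.card {k : T'.H // T'.pair k ≠ k} + 2 =
        Fintype.card {h : T.H // T.pair h ≠ h} := by
      have hsub : ({h₀, T.pair h₀} : Finset T.H) ⊆
          Finset.univ.filter fun h : T.H => T.pair h ≠ h := by
        intro y hy
        simp only [Finset.mem_insert, Finset.mem_singleton] at hy
        simp only [Finset.mem_filter, Finset.mem_univ, true_and]
        rcases hy with rfl | rfl
        · exact hEdge
        · rw [T.pair_invol]; exact Ne.symm hEdge
      have himg : (Finset.univ.filter fun k : T'.H => T'.pair k ≠ k).image c.q =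
          (Finset.univ.filter fun h : T.H => T.pair h ≠ h) \ {h₀, T.pair h₀} := by
        ext x
        simp only [Finset.mem_image, Finset.mem_filter, Finset.mem_univ, true_and,
          Finset.mem_sdiff, Finset.mem_insert, Finset.mem_singleton]
        constructor
        · rintro ⟨k, hk, rfl⟩
          refine ⟨(hpair_ne k).mp hk, ?_⟩
          push_neg
          exact hq1 k
        · rintro ⟨hx, hx2⟩
          push_neg at hx2
          obtain ⟨k, rfl⟩ := hqex x hx2.1 hx2.2
          exact ⟨k, (hpair_ne k).mpr hx, rfl⟩
      have hcardimg : (Finset.univ.filter fun k : T'.H => T'.pair k ≠ k).card =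
          (Finset.univ.filter fun h : T.H => T.pair h ≠ h).card - 2 := by
        rw [← Finset.card_image_of_injective _ c.q_inj, himg, Finset.card_sdiff_of_subset hsub,
          Finset.card_pair (Ne.symm hEdge)]
      have h2le : 2 ≤ (Finset.univ.filter fun h : T.H => T.pair h ≠ h).card := by
        calc 2 = ({h₀, T.pair h₀} : Finset T.H).card := (Finset.card_pair (Ne.symm hEdge)).symm
        _ ≤ _ := Finset.card_le_card hsub
      have e1 : Fintype.card {k : T'.H // T'.pair k ≠ k} =
          (Finset.univ.filter fun k : T'.H => T'.pair k ≠ k).card := Fintype.card_subtype _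
      have e2 : Fintype.card {h : T.H // T.pair h ≠ h} =
          (Finset.univ.filter fun h : T.H => T.pair h ≠ h).card := Fintype.card_subtype _
      omega
    have hV1 : 1 ≤ Fintype.card T.V := Fintype.card_pos_iff.mpr ⟨T.base h₀⟩
    omega
  · -- valence
    intro v'
    obtain ⟨v, rfl⟩ := c.p_surj v'
    by_cases hv : v = T.base h₀ ∨ v = T.base (T.pair h₀)
    · have hpv0 : c.p v = c.p (T.base h₀) := (hpv v).mpr hv
      have h3 : 2 < Fintype.card {h : T.H // T.base h = T.base h₀} :=
        lt_of_lt_of_le (by norm_num) (hval _)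
      obtain ⟨x1, x2, x3, h12, h13, h23⟩ := Fintype.two_lt_card_iff.mp h3
      have hpick : ∃ u1 u2 : T.H, u1 ≠ u2 ∧ T.base u1 = T.base h₀ ∧
          T.base u2 = T.base h₀ ∧ u1 ≠ h₀ ∧ u2 ≠ h₀ := by
        by_cases e1 : x1.1 = h₀
        · refine ⟨x2.1, x3.1, fun e => h23 (Subtype.ext e), x2.2, x3.2, ?_, ?_⟩
          · exact fun e => h12 (Subtype.ext (e1.trans e.symm))
          · exact fun e => h13 (Subtype.ext (e1.trans e.symm))
        · by_cases e2 : x2.1 = h₀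
          · refine ⟨x1.1, x3.1, fun e => h13 (Subtype.ext e), x1.2, x3.2, e1, ?_⟩
            exact fun e => h23 (Subtype.ext (e2.trans e.symm))
          · exact ⟨x1.1, x2.1, fun e => h12 (Subtype.ext e), x1.2, x2.2, e1, e2⟩
      have h3' : 2 < Fintype.card {h : T.H // T.base h = T.base (T.pair h₀)} :=
        lt_of_lt_of_le (by norm_num) (hval _)
      obtain ⟨y1, y2, y3, g12, g13, g23⟩ := Fintype.two_lt_card_iff.mp h3'
      have hpickw : ∃ w : T.H, T.base w = T.base (T.pair h₀) ∧ w ≠ T.pair h₀ := by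
        by_cases e1 : y1.1 = T.pair h₀
        · exact ⟨y2.1, y2.2, fun e => g12 (Subtype.ext (e1.trans e.symm))⟩
        · exact ⟨y1.1, y1.2, e1⟩
      obtain ⟨u1, u2, hu12, hbu1, hbu2, hu1h, hu2h⟩ := hpick
      obtain ⟨w, hbw, hwph⟩ := hpickw
      have hu1p : u1 ≠ T.pair h₀ := fun e => hb01 (e ▸ hbu1)
      have hu2p : u2 ≠ T.pair h₀ := fun e => hb01 (e ▸ hbu2)
      have hwh : w ≠ h₀ := fun e => hb01 (e ▸ hbw).symm
      obtain ⟨k1, hk1⟩ := hqex u1 hu1h hu1p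
      obtain ⟨k2, hk2⟩ := hqex u2 hu2h hu2p
      obtain ⟨k3, hk3⟩ := hqex w hwh hwph
      have hk1b : T'.base k1 = c.p v := by rw [c.p_base, hk1, hbu1, ← hpv0]
      have hk2b : T'.base k2 = c.p v := by rw [c.p_base, hk2, hbu2, ← hpv0]
      have hk3b : T'.base k3 = c.p v := by rw [c.p_base, hk3, hbw, hp01, ← hpv0]
      have hk12 : k1 ≠ k2 := fun e => hu12 (by rw [← hk1, ← hk2, e])
      have hk13 : k1 ≠ k3 := by
        intro e
        apply hb01
        have : u1 = w := by rw [← hk1, ← hk3, e]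
        rw [← hbw, ← this, hbu1]
      have hk23 : k2 ≠ k3 := by
        intro e
        apply hb01
        have : u2 = w := by rw [← hk2, ← hk3, e]
        rw [← hbw, ← this, hbu2]
      have : 2 < Fintype.card {k : T'.H // T'.base k = c.p v} :=
        Fintype.two_lt_card_iff.mpr ⟨⟨k1, hk1b⟩, ⟨k2, hk2b⟩, ⟨k3, hk3b⟩,
          fun e => hk12 (congrArg Subtype.val e),
          fun e => hk13 (congrArg Subtype.val e),
          fun e => hk23 (congrArg Subtype.val e)⟩
      omega
    · push_neg at hv
      have inj : ∀ h : {h : T.H // T.base h = v}, ∃ k : T'.H, c.q k = h.1 := by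
        rintro ⟨h, hb⟩
        exact hqex h (fun e => hv.1 (by rw [← hb, e])) (fun e => hv.2 (by rw [← hb, e]))
      choose J hJ using inj
      have hle : Fintype.card {h : T.H // T.base h = v} ≤
          Fintype.card {k : T'.H // T'.base k = c.p v} := by
        refine Fintype.card_le_of_injective
          (fun h => ⟨J h, by rw [c.p_base, hJ, h.2]⟩) ?_
        intro a b e
        have e2 : J a = J b := congrArg Subtype.val e
        apply Subtype.ext
        rw [← hJ a, ← hJ b, e2]
      exact le_trans (hval v) hle
  · -- existence of the contracted decoration
    intro D hD
    obtain ⟨hD1, hD2, hD3, hD4, hD5, hD6, hD7, hD8⟩ := hD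
    have hnoA : D.ord (T.pair h₀) ≠ h₀ := by
      intro e
      exact hb01 (by rw [← hD1 (T.pair h₀), e])
    have hnoB : D.ord h₀ ≠ T.pair h₀ := by
      intro e
      exact hb01 (by rw [← e, hD1 h₀])
    have hnext : ∀ x : T.H, nextH T D.ord h₀ x ≠ h₀ ∧ nextH T D.ord h₀ x ≠ T.pair h₀ := by
      intro x
      unfold nextH
      split_ifs with a1 a2
      · exact ⟨hnoA, ord_ne_self hval hD2 (T.pair h₀)⟩
      · exact ⟨ord_ne_self hval hD2 h₀, hnoB⟩
      · exact ⟨a1, a2⟩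
    have nextinj : ∀ x y : T.H, x ≠ h₀ → y ≠ h₀ → x ≠ T.pair h₀ → y ≠ T.pair h₀ →
        nextH T D.ord h₀ x = nextH T D.ord h₀ y → x = y := by
      intro x y hx1 hy1 hx2 hy2 e
      unfold nextH at e
      by_cases a1 : D.ord x = h₀ <;> by_cases b1 : D.ord y = h₀
      · exact D.ord.injective (a1.trans b1.symm)
      · rw [if_pos a1, if_neg b1] at e
        by_cases b2 : D.ord y = T.pair h₀
        · rw [if_pos b2] at e
          exact absurd (D.ord.injective e) hEdge
        · rw [if_neg b2] at e
          exact absurd (D.ord.injective e).symm hy2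
      · rw [if_neg a1, if_pos b1] at e
        by_cases a2 : D.ord x = T.pair h₀
        · rw [if_pos a2] at e
          exact absurd (D.ord.injective e) (Ne.symm hEdge)
        · rw [if_neg a2] at e
          exact absurd (D.ord.injective e) hx2
      · rw [if_neg a1, if_neg b1] at e
        by_cases a2 : D.ord x = T.pair h₀ <;> by_cases b2 : D.ord y = T.pair h₀
        · exact D.ord.injective (a2.trans b2.symm)
        · rw [if_pos a2, if_neg b2] at e
          exact absurd (D.ord.injective e).symm hy1
        · rw [if_neg a2, if_pos b2] at e
          exact absurd (D.ord.injective e) hx1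
        · rw [if_neg a2, if_neg b2] at e
          exact D.ord.injective e
    have hFex : ∀ k : T'.H, ∃ k' : T'.H, c.q k' = nextH T D.ord h₀ (c.q k) :=
      fun k => hqex _ (hnext (c.q k)).1 (hnext (c.q k)).2
    choose F hFq using hFex
    have hFinj : Function.Injective F := by
      intro a b e
      apply c.q_inj
      refine nextinj _ _ (hq1 a).1 (hq1 b).1 (hq1 a).2 (hq1 b).2 ?_
      rw [← hFq a, ← hFq b, e]
    refine ⟨⟨Equiv.ofBijective F (Finite.injective_iff_bijective.mp hFinj),
      fun k => D.mon (c.q k), D.cyc⟩, fun k => rfl, fun a => rfl, ?_⟩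
    intro k
    show c.q (F k) = _
    rw [hFq k]
    rfl
  · -- the contracted decoration is a decoration
    intro D D' hD hCD
    obtain ⟨hD1, hD2, hD3, hD4, hD5, hD6, hD7, hD8⟩ := hD
    obtain ⟨hm, hc, ho⟩ := hCD
    have ho' : ∀ k, c.q (D'.ord k) = nextH T D.ord h₀ (c.q k) := fun k => ho k
    have hne_ord : ∀ h, D.ord h ≠ h := ord_ne_self hval hD2
    have hnoA : D.ord (T.pair h₀) ≠ h₀ := fun e => hb01 (by rw [← hD1 (T.pair h₀), e])
    have hnoB : D.ord h₀ ≠ T.pair h₀ := fun e => hb01 (by rw [← e, hD1 h₀])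
    refine ⟨?_, ?_, ?_, ?_, ?_, ?_, ?_, ?_⟩
    · -- (ord preserves base)
      intro k
      rw [c.p_base, c.p_base, ho' k]
      unfold nextH
      split_ifs with a1 a2
      · rw [hD1 (T.pair h₀)]
        have hbk : T.base (c.q k) = T.base h₀ := by rw [← hD1 (c.q k), a1]
        rw [hbk]
        exact hp01
      · rw [hD1 h₀]
        have hbk : T.base (c.q k) = T.base (T.pair h₀) := by rw [← hD1 (c.q k), a2]
        rw [hbk]
        exact hp01.symm
      · rw [hD1 (c.q k)]
    · -- (transitivity at each vertex)
      have qpow_gen : ∀ (n : ℕ) (k : T'.H), T.base (c.q k) ≠ T.base h₀ →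
          T.base (c.q k) ≠ T.base (T.pair h₀) →
          c.q ((D'.ord ^ n) k) = (D.ord ^ n) (c.q k) := by
        intro n
        induction n with
        | zero => intro k _ _; rfl
        | succ n ih =>
          intro k hk1 hk2
          have n1 : ¬ D.ord (c.q k) = h₀ := fun e => hk1 (by rw [← hD1 (c.q k), e])
          have n2 : ¬ D.ord (c.q k) = T.pair h₀ := fun e => hk2 (by rw [← hD1 (c.q k), e])
          have hstep : c.q (D'.ord k) = D.ord (c.q k) := by
            rw [ho' k]
            unfold nextH
            rw [if_neg n1, if_neg n2]
          have hbase' : T.base (c.q (D'.ord k)) = T.base (c.q k) := by rw [hstep, hD1]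
          rw [pow_succ, pow_succ, Equiv.Perm.mul_apply, Equiv.Perm.mul_apply,
            ih (D'.ord k) (by rw [hbase']; exact hk1) (by rw [hbase']; exact hk2), hstep]
      obtain ⟨k0, hk0⟩ := hqex (D.ord h₀) (hne_ord h₀) hnoB
      obtain ⟨k1, hk1⟩ := hqex (D.ord (T.pair h₀)) hnoA (hne_ord (T.pair h₀))
      have claimAB : ∀ (h : T.H), (h = h₀ ∨ h = T.pair h₀) →
          ∀ (kk kref : T'.H), c.q kref = D.ord h →
          ∀ n : ℕ, (D.ord ^ n) h = c.q kk → c.q kk ≠ h → D'.ord.SameCycle kk kref := by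
        intro h hh kk kref href n
        induction n generalizing kk with
        | zero =>
          intro e he
          simp only [pow_zero, Equiv.Perm.one_apply] at e
          exact absurd e.symm he
        | succ n ih =>
          intro e he
          set y := (D.ord ^ n) h with hy
          have hby : T.base y = T.base h := base_ord_pow hD1 n h
          have hqk : c.q kk = D.ord y := by
            rw [← e, pow_succ', Equiv.Perm.mul_apply, ← hy]
          by_cases hyh : y = h
          · have hkk : kk = kref := c.q_inj (by rw [hqk, hyh, href])
            exact hkk ▸ Equiv.Perm.SameCycle.refl D'.ord kref
          · have hyne : y ≠ h₀ ∧ y ≠ T.pair h₀ := by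
              rcases hh with rfl | rfl
              · exact ⟨hyh, fun e2 => hb01 (by rw [← e2]; exact hby)⟩
              · exact ⟨fun e2 => hb01 (hby.symm.trans (congrArg T.base e2)), hyh⟩
            obtain ⟨ky, hky⟩ := hqex y hyne.1 hyne.2
            have n1 : ¬ D.ord y = h₀ := fun e2 => (hq1 kk).1 (hqk.trans e2)
            have n2 : ¬ D.ord y = T.pair h₀ := fun e2 => (hq1 kk).2 (hqk.trans e2)
            have hstep : D'.ord ky = kk := by
              apply c.q_inj
              rw [ho' ky, hky, hqk]
              unfold nextH
              rw [if_neg n1, if_neg n2]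
            have sc1 : D'.ord.SameCycle ky kk := by
              rw [← hstep]
              exact ⟨1, by simp⟩
            exact sc1.symm.trans
              (ih ky (by rw [hky]) (fun e2 => hyh (by rw [← hky]; exact e2)))
      have scb0 : ∀ kk : T'.H, T.base (c.q kk) = T.base h₀ → D'.ord.SameCycle kk k0 := by
        intro kk hbk
        obtain ⟨n, hn⟩ := hD2 h₀ (c.q kk) hbk.symm
        exact claimAB h₀ (Or.inl rfl) kk k0 hk0 n hn (hq1 kk).1
      have scb1 : ∀ kk : T'.H, T.base (c.q kk) = T.base (T.pair h₀) →
          D'.ord.SameCycle kk k1 := by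
        intro kk hbk
        obtain ⟨n, hn⟩ := hD2 (T.pair h₀) (c.q kk) hbk.symm
        exact claimAB (T.pair h₀) (Or.inr rfl) kk k1 hk1 n hn (hq1 kk).2
      have link : D'.ord.SameCycle k1 k0 := by
        have hoz : D.ord (D.ord.symm h₀) = h₀ := D.ord.apply_symm_apply h₀
        have hbz : T.base (D.ord.symm h₀) = T.base h₀ := by rw [← hD1 (D.ord.symm h₀), hoz]
        have hz1 : D.ord.symm h₀ ≠ h₀ := by
          intro e
          apply hne_ord h₀
          have h2 := hoz
          rw [e] at h2
          exact h2
        have hz2 : D.ord.symm h₀ ≠ T.pair h₀ := fun e => hb01 (by rw [← e]; exact hbz)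
        obtain ⟨kz, hkz⟩ := hqex (D.ord.symm h₀) hz1 hz2
        have hstep : D'.ord kz = k1 := by
          apply c.q_inj
          rw [ho' kz, hkz, hk1]
          unfold nextH
          rw [if_pos hoz]
        have sc1 : D'.ord.SameCycle kz k1 := by
          rw [← hstep]
          exact ⟨1, by simp⟩
        exact sc1.symm.trans (scb0 kz (by rw [hkz]; exact hbz))
      intro k l hbase
      rw [c.p_base, c.p_base] at hbase
      by_cases hbk : T.base (c.q k) = T.base h₀ ∨ T.base (c.q k) = T.base (T.pair h₀)
      · have hpk : c.p (T.base (c.q k)) = c.p (T.base h₀) := (hpv _).mpr hbk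
        have hbl : T.base (c.q l) = T.base h₀ ∨ T.base (c.q l) = T.base (T.pair h₀) :=
          (hpv _).mp (by rw [← hbase]; exact hpk)
        have sck : D'.ord.SameCycle k k0 := by
          rcases hbk with hb | hb
          · exact scb0 k hb
          · exact (scb1 k hb).trans link
        have scl : D'.ord.SameCycle l k0 := by
          rcases hbl with hb | hb
          · exact scb0 l hb
          · exact (scb1 l hb).trans link
        obtain ⟨i, _, hi⟩ := (sck.trans scl.symm).exists_pow_eq'
        exact ⟨i, hi⟩
      · push_neg at hbk
        have hbeq : T.base (c.q k) = T.base (c.q l) := by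
          rcases (c.p_eq_iff _ _).mp hbase with e | e
          · exact e
          · rw [Set.pair_eq_pair_iff] at e
            rcases e with ⟨e1, e2⟩ | ⟨e1, e2⟩
            · exact absurd e1 hbk.1
            · exact absurd e1 hbk.2
        obtain ⟨n, hn⟩ := hD2 (c.q k) (c.q l) hbeq
        refine ⟨n, c.q_inj ?_⟩
        rw [qpow_gen n k hbk.1 hbk.2, hn]
    · -- (cyclic products are trivial)
      have Psi_step : ∀ x, PsiFun D.ord D.mon (D.ord x) = D.mon x * PsiFun D.ord D.mon x :=
        PsiFun_step D.ord D.mon hD3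
      have hmon_eq : ∀ x, D.mon x = PsiFun D.ord D.mon (D.ord x) * (PsiFun D.ord D.mon x)⁻¹ := by
        intro x
        rw [Psi_step x]
        group
      set cc : Equiv.Perm (Fin P.d) :=
        (PsiFun D.ord D.mon (T.pair h₀))⁻¹ * D.mon h₀ * PsiFun D.ord D.mon h₀ with hcc
      set α : T.H → Equiv.Perm (Fin P.d) := fun x =>
        if T.base x = T.base (T.pair h₀) then PsiFun D.ord D.mon x * cc
        else PsiFun D.ord D.mon x with hα
      have hαb1 : ∀ x, T.base x = T.base (T.pair h₀) →
          α x = PsiFun D.ord D.mon x * cc := by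
        intro x hx
        rw [hα]
        beta_reduce
        rw [if_pos hx]
      have hαb0 : ∀ x, ¬ T.base x = T.base (T.pair h₀) → α x = PsiFun D.ord D.mon x := by
        intro x hx
        rw [hα]
        beta_reduce
        rw [if_neg hx]
      have key : ∀ k, D'.mon k = α (c.q (D'.ord k)) * (α (c.q k))⁻¹ := by
        intro k
        rw [hm k, ho' k]
        unfold nextH
        split_ifs with a1 a2
        · have hbk' : ¬ T.base (c.q k) = T.base (T.pair h₀) := by
            rw [← hD1 (c.q k), a1]
            exact fun e => hb01 e.symm
          rw [hαb1 _ (hD1 (T.pair h₀)), hαb0 _ hbk', hcc, Psi_step (T.pair h₀), hD4 h₀ hEdge]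
          have h2 := hmon_eq (c.q k)
          rw [a1] at h2
          rw [h2]
          group
        · have hb0 : ¬ T.base (D.ord h₀) = T.base (T.pair h₀) := by
            rw [hD1 h₀]
            exact fun e => hb01 e.symm
          have hbk : T.base (c.q k) = T.base (T.pair h₀) := by rw [← hD1 (c.q k), a2]
          rw [hαb0 _ hb0, hαb1 _ hbk, hcc, Psi_step h₀]
          have h2 := hmon_eq (c.q k)
          rw [a2] at h2
          rw [h2]
          group
        · by_cases hbk : T.base (c.q k) = T.base (T.pair h₀)
          · have hbo : T.base (D.ord (c.q k)) = T.base (T.pair h₀) := by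
              rw [hD1]
              exact hbk
            rw [hαb1 _ hbo, hαb1 _ hbk, hmon_eq (c.q k)]
            group
          · have hbo : ¬ T.base (D.ord (c.q k)) = T.base (T.pair h₀) := by
              rw [hD1]
              exact hbk
            rw [hαb0 _ hbo, hαb0 _ hbk, hmon_eq (c.q k)]
      intro k n hk
      rw [prodAlong_telescope D'.ord D'.mon (fun kk => α (c.q kk)) key n k, hk]
      group
    · -- (edge inversion)
      intro k hk
      rw [hm, hm, c.q_pair]
      exact hD4 (c.q k) ((hpair_ne k).mp hk)
    · -- (branch profiles)
      intro b
      rw [hm, c.q_leg]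
      exact hD5 b
    · -- (cycle labels are distinct)
      intro a a' he hsc
      rw [hm, c.q_leg, hc, hc] at hsc
      exact hD6 a a' he hsc
    · -- (cycle lengths)
      intro a
      rw [hm, c.q_leg, hc]
      exact hD7 a
    · -- (transitivity of the monodromy group)
      have hfe : (fun b => D'.mon (T'.leg b)) = fun b => D.mon (T.leg b) :=
        funext fun b => by rw [hm, c.q_leg]
      intro i j
      rw [hfe]
      exact hD8 i j
end Cyc
end

section
/- Let P be a portrait and 𝒯 a B-marked stable tree. A P-decoration of 𝒯 is determined by its cyclic-order datum, its leg permutations and its cycle labelling: if (ord, mon₁, cyc) and (ord, mon₂, cyc) are P-decorations of 𝒯 with mon₁(b) = mon₂(b) for every leg b ∈ B, then mon₁(h) = mon₂(h) for every half-edge h of 𝒯. -/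
open scoped Classical

private lemma conn_card_le_aux {V : Type} [Fintype V] :
    ∀ (n : ℕ) (G : SimpleGraph V) [Fintype G.edgeSet], G.edgeFinset.card = n → G.Connected →
      Fintype.card V ≤ n + 1 := by
  intro n
  induction n using Nat.strong_induction_on with
  | _ n IH =>
    intro G _ hcard hconn
    by_cases hb : ∀ e ∈ G.edgeSet, G.IsBridge e
    · have hA : G.IsAcyclic := SimpleGraph.isAcyclic_iff_forall_edge_isBridge.mpr hb
      have := SimpleGraph.IsTree.card_edgeFinset ⟨hconn, hA⟩
      omega
    · push_neg at hb
      obtain ⟨e, he, hnb⟩ := hb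
      induction e using Sym2.ind with
      | _ a b =>
        have hadj : G.Adj a b := G.mem_edgeSet.mp he
        rw [SimpleGraph.isBridge_iff] at hnb
        push_neg at hnb
        have hr : (G \ SimpleGraph.fromEdgeSet {s(a, b)}).Reachable a b := hnb
        set G' := G \ SimpleGraph.fromEdgeSet {s(a, b)} with hG'
        have hadj' : ∀ x y : V, G'.Adj x y ↔ G.Adj x y ∧ s(x, y) ≠ s(a, b) := by
          intro x y
          rw [hG', SimpleGraph.sdiff_adj, SimpleGraph.fromEdgeSet_adj]
          constructor
          · rintro ⟨h1, h2⟩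
            refine ⟨h1, fun hc => h2 ⟨by simp [hc], h1.ne⟩⟩
          · rintro ⟨h1, h2⟩
            exact ⟨h1, fun hc => h2 (by simpa using hc.1)⟩
        have hconn' : G'.Connected := by
          have hne : Nonempty V := hconn.nonempty
          refine SimpleGraph.Connected.mk (fun x y => ?_)
          obtain ⟨p⟩ := hconn.preconnected x y
          induction p with
          | nil => exact SimpleGraph.Reachable.refl _
          | @cons x z y hxz p ih =>
            refine SimpleGraph.Reachable.trans ?_ ih
            by_cases hxe : s(x, z) = s(a, b)
            · rcases Sym2.eq_iff.mp hxe with ⟨rfl, rfl⟩ | ⟨rfl, rfl⟩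
              · exact hr
              · exact hr.symm
            · exact SimpleGraph.Adj.reachable ((hadj' x z).mpr ⟨hxz, hxe⟩)
        have hEs : G'.edgeSet = G.edgeSet \ {s(a, b)} := by
          rw [hG', SimpleGraph.edgeSet_sdiff, SimpleGraph.edgeSet_fromEdgeSet]
          ext e
          simp only [Set.mem_diff, Set.mem_singleton_iff, Set.mem_setOf_eq]
          constructor
          · rintro ⟨h1, h2⟩
            refine ⟨h1, fun hc => h2 ⟨hc, ?_⟩⟩
            simp [hc, hadj.ne]
          · rintro ⟨h1, h2⟩
            exact ⟨h1, fun hc => h2 hc.1⟩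
        have hfin : G'.edgeFinset = G.edgeFinset.erase s(a, b) := by
          ext e
          simp [SimpleGraph.mem_edgeFinset, hEs, Set.mem_diff, and_comm]
        have hmem : s(a, b) ∈ G.edgeFinset := SimpleGraph.mem_edgeFinset.mpr he
        have hcard' : G'.edgeFinset.card = n - 1 := by
          rw [hfin, Finset.card_erase_of_mem hmem, hcard]
        have hn : 1 ≤ n := by
          rw [← hcard]
          exact Finset.card_pos.mpr ⟨_, hmem⟩
        have := IH (n - 1) (by omega) G' hcard' hconn'
        omega


namespace BMarkedGraph

variable {B : Type} (T : BMarkedGraph B)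

/-- The underlying simple graph of a `B`-marked graph. -/
@[reducible] def simpleGraph : SimpleGraph T.V where
  Adj v w := T.Adj v w ∧ v ≠ w
  symm := by
    constructor
    rintro v w ⟨⟨m, hm, h1, h2⟩, hvw⟩
    refine ⟨⟨T.pair m, ?_, h2, ?_⟩, hvw.symm⟩
    · rw [T.pair_invol]; exact fun hc => hm hc.symm
    · rw [T.pair_invol]; exact h1
  loopless := ⟨fun v hc => hc.2 rfl⟩

/-- The set of (geometric) edges, as unordered pairs of half-edges. -/
noncomputable def edgeClasses : Finset (Sym2 T.H) :=
  (Finset.univ.filter fun m => T.pair m ≠ m).image fun m => s(m, T.pair m)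

lemma two_mul_card_edgeClasses :
    2 * (T.edgeClasses).card = Fintype.card {h : T.H // T.pair h ≠ h} := by
  rw [Fintype.card_subtype]
  rw [Finset.card_eq_sum_card_fiberwise
    (f := fun m => s(m, T.pair m)) (t := T.edgeClasses)
    (fun m hm => Finset.mem_image_of_mem _ hm)]
  rw [Finset.sum_congr rfl (g := fun _ => 2) ?_, Finset.sum_const, smul_eq_mul, mul_comm]
  intro c hc
  obtain ⟨m₀, hm₀, rfl⟩ := Finset.mem_image.mp hc
  have hm₀' := (Finset.mem_filter.mp hm₀).2
  have hfib : (Finset.univ.filter fun m => T.pair m ≠ m).filter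
      (fun m => s(m, T.pair m) = s(m₀, T.pair m₀)) = {m₀, T.pair m₀} := by
    ext m
    simp only [Finset.mem_filter, Finset.mem_univ, true_and, Finset.mem_insert,
      Finset.mem_singleton]
    constructor
    · rintro ⟨hm, he⟩
      rcases Sym2.eq_iff.mp he with ⟨h1, h2⟩ | ⟨h1, h2⟩
      · exact Or.inl h1
      · exact Or.inr h1
    · rintro (rfl | rfl)
      · exact ⟨hm₀', rfl⟩
      · constructor
        · rw [T.pair_invol]; exact fun hc => hm₀' hc.symm
        · rw [T.pair_invol]; exact Sym2.eq_swap
  rw [hfib, Finset.card_insert_of_notMem (by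
    simp only [Finset.mem_singleton]; exact fun hc => hm₀' hc.symm), Finset.card_singleton]

lemma sep (hT : T.IsStableTree) {h k : T.H} (hh : T.pair h ≠ h) (hk : T.pair k ≠ k)
    (hbk : T.base k = T.base h) (hkh : k ≠ h) :
    ¬ Relation.ReflTransGen (T.AdjAvoid (T.base h)) (T.base (T.pair k)) (T.base (T.pair h)) := by
  obtain ⟨hnl, hcn, hct, -⟩ := hT
  intro R
  have huv : T.base (T.pair h) ≠ T.base h := hnl h hh
  have hu'v : T.base (T.pair k) ≠ T.base h := by rw [← hbk]; exact hnl k hk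
  have hne : Nonempty T.V := ⟨T.base h⟩
  have hGirr : ∀ x y : T.V, T.Adj x y → x ≠ y := by
    rintro x y ⟨m, hm, rfl, h2⟩ rfl
    exact hnl m hm h2
  have hGconn : T.simpleGraph.Connected := by
    refine SimpleGraph.Connected.mk (fun x y => ?_)
    have hxy := hcn x y
    induction hxy with
    | refl => exact SimpleGraph.Reachable.refl _
    | tail _ step ih =>
      exact ih.trans (SimpleGraph.Adj.reachable ⟨step, hGirr _ _ step⟩)
  have hcards : 2 * T.edgeClasses.card + 2 = 2 * Fintype.card T.V := by
    rw [T.two_mul_card_edgeClasses]; exact hct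
  have hex : ∀ e ∈ T.simpleGraph.edgeFinset,
      ∃ m, T.pair m ≠ m ∧ s(T.base m, T.base (T.pair m)) = e := by
    intro e he
    rw [SimpleGraph.mem_edgeFinset] at he
    induction e using Sym2.ind with
    | _ x y =>
      obtain ⟨⟨m, hm, h1, h2⟩, -⟩ := T.simpleGraph.mem_edgeSet.mp he
      exact ⟨m, hm, by rw [h1, h2]⟩
  set F : Sym2 T.V → Sym2 T.H := fun e =>
    if he : ∃ m, T.pair m ≠ m ∧ s(T.base m, T.base (T.pair m)) = e then
      s(he.choose, T.pair he.choose)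
    else s(h, h) with hF
  have hFspec : ∀ e ∈ T.simpleGraph.edgeFinset,
      ∃ m, T.pair m ≠ m ∧ s(T.base m, T.base (T.pair m)) = e ∧ F e = s(m, T.pair m) := by
    intro e he
    have hx := hex e he
    exact ⟨hx.choose, hx.choose_spec.1, hx.choose_spec.2, by rw [hF]; simp only [dif_pos hx]⟩
  have hFe : ∀ e ∈ T.simpleGraph.edgeFinset, ∀ m, F e = s(m, T.pair m) →
      e = s(T.base m, T.base (T.pair m)) := by
    intro e he m hm
    obtain ⟨m', hm'1, hm'2, hm'3⟩ := hFspec e he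
    have heq := hm'3.symm.trans hm
    rcases Sym2.eq_iff.mp heq with ⟨h1, h2⟩ | ⟨h1, h2⟩
    · rw [← hm'2, h1]
    · rw [← hm'2, h1, T.pair_invol]
      exact Sym2.eq_swap
  have hFinj : ∀ e₁ ∈ T.simpleGraph.edgeFinset, ∀ e₂ ∈ T.simpleGraph.edgeFinset,
      F e₁ = F e₂ → e₁ = e₂ := by
    intro e₁ h₁ e₂ h₂ heq
    obtain ⟨m, hm1, hm2, hm3⟩ := hFspec e₁ h₁
    rw [← hm2, ← hFe e₂ h₂ m (by rw [← heq, hm3])]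
  have hFmem : ∀ e ∈ T.simpleGraph.edgeFinset, F e ∈ T.edgeClasses := by
    intro e he
    obtain ⟨m, hm1, hm2, hm3⟩ := hFspec e he
    rw [hm3]
    exact Finset.mem_image_of_mem _ (Finset.mem_filter.mpr ⟨Finset.mem_univ m, hm1⟩)
  have hcardle : T.simpleGraph.edgeFinset.card ≤ T.edgeClasses.card :=
    Finset.card_le_card_of_injOn F (fun e he => hFmem e he) (fun e₁ h₁ e₂ h₂ => hFinj e₁ h₁ e₂ h₂)
  have hLB := conn_card_le_aux T.simpleGraph.edgeFinset.card T.simpleGraph rfl hGconn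
  by_cases hmul : T.base (T.pair k) = T.base (T.pair h)
  · -- parallel edges: refine the bound by one
    have hckmem : s(k, T.pair k) ∈ T.edgeClasses :=
      Finset.mem_image_of_mem _ (Finset.mem_filter.mpr ⟨Finset.mem_univ k, hk⟩)
    have hchmem : s(h, T.pair h) ∈ T.edgeClasses :=
      Finset.mem_image_of_mem _ (Finset.mem_filter.mpr ⟨Finset.mem_univ h, hh⟩)
    have hclne : s(h, T.pair h) ≠ s(k, T.pair k) := by
      intro hc
      rcases Sym2.eq_iff.mp hc with ⟨h1, -⟩ | ⟨h1, -⟩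
      · exact hkh h1.symm
      · exact hu'v (by rw [← h1])
    have hker : ∀ e ∈ T.simpleGraph.edgeFinset, F e = s(h, T.pair h) ∨ F e = s(k, T.pair k) →
        e = s(T.base h, T.base (T.pair h)) := by
      intro e he hc
      rcases hc with hc | hc
      · exact hFe e he h hc
      · rw [hFe e he k hc, hbk, hmul]
    have hbound : T.simpleGraph.edgeFinset.card + 1 ≤ T.edgeClasses.card := by
      by_cases hhit : ∃ e ∈ T.simpleGraph.edgeFinset, F e = s(h, T.pair h)
      · obtain ⟨e₀, he₀, hFe₀⟩ := hhit
        have : ∀ e ∈ T.simpleGraph.edgeFinset, F e ∈ T.edgeClasses.erase s(k, T.pair k) := by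
          intro e he
          refine Finset.mem_erase.mpr ⟨?_, hFmem e he⟩
          intro hc
          have he1 : e = s(T.base h, T.base (T.pair h)) := hker e he (Or.inr hc)
          have he2 : e₀ = s(T.base h, T.base (T.pair h)) := hker e₀ he₀ (Or.inl hFe₀)
          have : e = e₀ := he1.trans he2.symm
          rw [this, hFe₀] at hc
          exact hclne hc
        have := Finset.card_le_card_of_injOn F this (fun e₁ h₁ e₂ h₂ => hFinj e₁ h₁ e₂ h₂)
        rw [Finset.card_erase_of_mem hckmem] at this
        have hpos : 0 < T.edgeClasses.card := Finset.card_pos.mpr ⟨_, hckmem⟩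
        omega
      · push_neg at hhit
        have : ∀ e ∈ T.simpleGraph.edgeFinset, F e ∈ T.edgeClasses.erase s(h, T.pair h) :=
          fun e he => Finset.mem_erase.mpr ⟨hhit e he, hFmem e he⟩
        have := Finset.card_le_card_of_injOn F this (fun e₁ h₁ e₂ h₂ => hFinj e₁ h₁ e₂ h₂)
        rw [Finset.card_erase_of_mem hchmem] at this
        have hpos : 0 < T.edgeClasses.card := Finset.card_pos.mpr ⟨_, hchmem⟩
        omega
    omega
  · -- delete the edge `s(base h, base (pair h))` from the simple graph
    set e₀ : Sym2 T.V := s(T.base h, T.base (T.pair h)) with he₀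
    set G' := T.simpleGraph \ SimpleGraph.fromEdgeSet {e₀} with hG2
    have hadj' : ∀ x y : T.V, G'.Adj x y ↔ T.simpleGraph.Adj x y ∧ s(x, y) ≠ e₀ := by
      intro x y
      rw [hG2, SimpleGraph.sdiff_adj, SimpleGraph.fromEdgeSet_adj]
      constructor
      · rintro ⟨h1, h2⟩
        exact ⟨h1, fun hc => h2 ⟨by simp [hc], h1.2⟩⟩
      · rintro ⟨h1, h2⟩
        exact ⟨h1, fun hc => h2 (by simpa using hc.1)⟩
    have hadjvu' : G'.Adj (T.base h) (T.base (T.pair k)) := by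
      refine (hadj' _ _).mpr ⟨⟨⟨k, hk, hbk, rfl⟩, hu'v.symm⟩, ?_⟩
      intro hc
      rcases Sym2.eq_iff.mp hc with ⟨-, h2⟩ | ⟨h1, -⟩
      · exact hmul h2
      · exact huv h1.symm
    have hru' : ∀ w, Relation.ReflTransGen (T.AdjAvoid (T.base h)) (T.base (T.pair k)) w →
        G'.Reachable (T.base (T.pair k)) w := by
      intro w hw
      induction hw with
      | refl => exact SimpleGraph.Reachable.refl _
      | tail _ step ih =>
        refine ih.trans (SimpleGraph.Adj.reachable ?_)
        obtain ⟨hx, hy, hTa⟩ := step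
        refine (hadj' _ _).mpr ⟨⟨hTa, hGirr _ _ hTa⟩, ?_⟩
        intro hc
        rcases Sym2.eq_iff.mp hc with ⟨h1, -⟩ | ⟨-, h2⟩
        · exact hx h1
        · exact hy h2
    have hvu : G'.Reachable (T.base h) (T.base (T.pair h)) :=
      (SimpleGraph.Adj.reachable hadjvu').trans (hru' _ R)
    have hconn' : G'.Connected := by
      refine SimpleGraph.Connected.mk (fun x y => ?_)
      have hxy := hcn x y
      induction hxy with
      | refl => exact SimpleGraph.Reachable.refl _
      | tail _ step ih =>
        refine ih.trans ?_
        rename_i x' y' _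
        by_cases hce : s(x', y') = e₀
        · rcases Sym2.eq_iff.mp hce with ⟨h1, h2⟩ | ⟨h1, h2⟩
          · rw [h1, h2]; exact hvu
          · rw [h1, h2]; exact hvu.symm
        · exact SimpleGraph.Adj.reachable ((hadj' _ _).mpr ⟨⟨step, hGirr _ _ step⟩, hce⟩)
    have hmem : e₀ ∈ T.simpleGraph.edgeFinset := by
      rw [SimpleGraph.mem_edgeFinset, he₀]
      exact T.simpleGraph.mem_edgeSet.mpr ⟨⟨h, hh, rfl, rfl⟩, huv.symm⟩
    have hEs : G'.edgeSet = T.simpleGraph.edgeSet \ {e₀} := by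
      rw [hG2, SimpleGraph.edgeSet_sdiff, SimpleGraph.edgeSet_fromEdgeSet]
      ext e
      simp only [Set.mem_diff, Set.mem_singleton_iff, Set.mem_setOf_eq]
      constructor
      · rintro ⟨h1, h2⟩
        refine ⟨h1, fun hc => h2 ⟨hc, ?_⟩⟩
        rw [hc, he₀]
        simp [huv.symm]
      · rintro ⟨h1, h2⟩
        exact ⟨h1, fun hc => h2 hc.1⟩
    have hfin : G'.edgeFinset = T.simpleGraph.edgeFinset.erase e₀ := by
      ext e
      simp [SimpleGraph.mem_edgeFinset, hEs, Set.mem_diff, and_comm]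
    have hcard' : G'.edgeFinset.card = T.simpleGraph.edgeFinset.card - 1 := by
      rw [hfin, Finset.card_erase_of_mem hmem]
    have hpos : 1 ≤ T.simpleGraph.edgeFinset.card := Finset.card_pos.mpr ⟨_, hmem⟩
    have hLB' := conn_card_le_aux G'.edgeFinset.card G' rfl hconn'
    omega
end BMarkedGraph


namespace BMarkedGraph

variable {B : Type} (T : BMarkedGraph B)

/-- The number of vertices weakly on the side of `base h` of the edge `{h, pair h}`. -/
noncomputable def sideCard (h : T.H) : ℕ :=
  (Finset.univ.filter fun w =>
    Relation.ReflTransGen (T.AdjAvoid (T.base (T.pair h))) (T.base h) w).card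

lemma sideCard_lt (hT : T.IsStableTree) {h k : T.H} (hh : T.pair h ≠ h) (hk : T.pair k ≠ k)
    (hbk : T.base k = T.base h) (hkh : k ≠ h) : T.sideCard (T.pair k) < T.sideCard h := by
  have hsep := T.sep hT hh hk hbk hkh
  have hnl := hT.1
  apply Finset.card_lt_card
  have hsub : (Finset.univ.filter fun w =>
      Relation.ReflTransGen (T.AdjAvoid (T.base (T.pair (T.pair k)))) (T.base (T.pair k)) w) ⊆
      (Finset.univ.filter fun w =>
      Relation.ReflTransGen (T.AdjAvoid (T.base (T.pair h))) (T.base h) w) := by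
    intro w hw
    rw [Finset.mem_filter] at hw ⊢
    refine ⟨Finset.mem_univ _, ?_⟩
    have hw' := hw.2
    rw [T.pair_invol, hbk] at hw'
    clear hw
    induction hw' with
    | refl =>
      refine Relation.ReflTransGen.single
        ⟨fun hc => (hnl h hh) hc.symm, fun hc => hsep (hc ▸ Relation.ReflTransGen.refl),
          k, hk, hbk, rfl⟩
    | tail R'' step ih =>
      refine ih.tail ⟨?_, ?_, step.2.2⟩
      · intro hc; exact hsep (hc ▸ R'')
      · intro hc; exact hsep (hc ▸ (R''.tail step))
  rw [Finset.ssubset_iff_of_subset hsub]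
  refine ⟨T.base h, Finset.mem_filter.mpr ⟨Finset.mem_univ _, Relation.ReflTransGen.refl⟩, ?_⟩
  intro hc
  rw [Finset.mem_filter, T.pair_invol, hbk] at hc
  rcases Relation.ReflTransGen.cases_tail hc.2 with heq | ⟨b, R'', step⟩
  · exact hnl k hk (heq.symm.trans hbk.symm)
  · exact step.2.1 rfl

end BMarkedGraph

variable {B A : Type} [Fintype B] [DecidableEq B] [Fintype A] [DecidableEq A]

lemma prodAlong_congr {H : Type} {d : ℕ} (ord : Equiv.Perm H) (mon₁ mon₂ : H → Equiv.Perm (Fin d)) :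
    ∀ (m : ℕ) (h : H), (∀ i < m, mon₁ ((ord ^ i) h) = mon₂ ((ord ^ i) h)) →
      prodAlong ord mon₁ h m = prodAlong ord mon₂ h m := by
  intro m
  induction m with
  | zero => intro h _; rfl
  | succ m ih =>
    intro h hyp
    show prodAlong ord mon₁ (ord h) m * mon₁ h = prodAlong ord mon₂ (ord h) m * mon₂ h
    have h0 : mon₁ h = mon₂ h := by simpa using hyp 0 (Nat.succ_pos m)
    have hrest : ∀ i < m, mon₁ ((ord ^ i) (ord h)) = mon₂ ((ord ^ i) (ord h)) := by
      intro i hi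
      have hcomm : (ord ^ i) (ord h) = (ord ^ (i + 1)) h := by
        rw [pow_succ, Equiv.Perm.mul_apply]
      rw [hcomm]
      exact hyp (i + 1) (by omega)
    rw [ih (ord h) hrest, h0]

/-- A `P`-decoration of a `B`-marked stable tree is determined by its
cyclic-order datum, its leg permutations and its cycle labelling: two decorations with the
same `ord`, the same `cyc` and the same permutations on all legs have the same
permutations on all half-edges. -/
theorem decoration_determined_by_legs (P : Portrait B A) (T : BMarkedGraph B)
    (hT : T.IsStableTree) (D₁ D₂ : PreDecoration P T)
    (hD₁ : IsDecoration P T D₁) (hD₂ : IsDecoration P T D₂)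
    (hord : D₁.ord = D₂.ord) (hcyc : D₁.cyc = D₂.cyc)
    (hleg : ∀ b : B, D₁.mon (T.leg b) = D₂.mon (T.leg b)) :
    ∀ h : T.H, D₁.mon h = D₂.mon h := by
  have hbase1 : ∀ (i : ℕ) (x : T.H), T.base ((D₁.ord ^ i) x) = T.base x := by
    intro i
    induction i with
    | zero => intro x; simp
    | succ i ih =>
      intro x
      rw [pow_succ, Equiv.Perm.mul_apply, ih (D₁.ord x), hD₁.1 x]
  suffices main : ∀ (n : ℕ) (h : T.H), T.sideCard h = n → D₁.mon h = D₂.mon h by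
    intro h; exact main _ h rfl
  intro n
  induction n using Nat.strong_induction_on with
  | _ n IH =>
  intro h hn
  by_cases hp : T.pair h = h
  · obtain ⟨b, rfl⟩ := T.leg_of_fixed h hp
    exact hleg b
  · set n₀ := Function.minimalPeriod ⇑D₁.ord h with hn₀
    have hper : (D₁.ord ^ n₀) h = h := by
      show (⇑(D₁.ord ^ n₀)) h = h
      rw [Equiv.Perm.coe_pow]
      exact Function.iterate_minimalPeriod
    have hpos : 0 < n₀ := by
      apply Function.IsPeriodicPt.minimalPeriod_pos (orderOf_pos D₁.ord)
      show (⇑D₁.ord)^[orderOf D₁.ord] h = h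
      rw [← Equiv.Perm.coe_pow, pow_orderOf_eq_one]
      rfl
    have hmonk : ∀ i, 0 < i → i < n₀ → D₁.mon ((D₁.ord ^ i) h) = D₂.mon ((D₁.ord ^ i) h) := by
      intro i hi1 hi2
      have hbk : T.base ((D₁.ord ^ i) h) = T.base h := hbase1 i h
      have hkh : (D₁.ord ^ i) h ≠ h := by
        intro hc
        have hpp : Function.IsPeriodicPt ⇑D₁.ord i h := by
          show (⇑D₁.ord)^[i] h = h
          rw [← Equiv.Perm.coe_pow]
          exact hc
        have := hpp.minimalPeriod_le hi1
        omega
      by_cases hkp : T.pair ((D₁.ord ^ i) h) = (D₁.ord ^ i) h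
      · obtain ⟨b, hb⟩ := T.leg_of_fixed _ hkp
        rw [← hb]
        exact hleg b
      · have hlt : T.sideCard (T.pair ((D₁.ord ^ i) h)) < n :=
          hn ▸ T.sideCard_lt hT hp hkp hbk hkh
        have hpk := IH _ hlt (T.pair ((D₁.ord ^ i) h)) rfl
        have e₁ := hD₁.2.2.2.1 _ hkp
        have e₂ := hD₂.2.2.2.1 _ hkp
        rw [e₁, e₂] at hpk
        exact inv_injective hpk
    obtain ⟨m, hm⟩ : ∃ m, n₀ = m + 1 := ⟨n₀ - 1, by omega⟩
    have P₁ : prodAlong D₁.ord D₁.mon h n₀ = 1 := hD₁.2.2.1 h n₀ hper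
    have P₂ : prodAlong D₁.ord D₂.mon h n₀ = 1 := by
      rw [hord]
      exact hD₂.2.2.1 h n₀ (by rw [← hord]; exact hper)
    rw [hm] at P₁ P₂
    have U₁ : prodAlong D₁.ord D₁.mon h (m + 1) =
        prodAlong D₁.ord D₁.mon (D₁.ord h) m * D₁.mon h := rfl
    have U₂ : prodAlong D₁.ord D₂.mon h (m + 1) =
        prodAlong D₁.ord D₂.mon (D₁.ord h) m * D₂.mon h := rfl
    rw [U₁] at P₁
    rw [U₂] at P₂
    have hQ : prodAlong D₁.ord D₁.mon (D₁.ord h) m = prodAlong D₁.ord D₂.mon (D₁.ord h) m := by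
      apply prodAlong_congr
      intro i hi
      have hcomm : (D₁.ord ^ i) (D₁.ord h) = (D₁.ord ^ (i + 1)) h := by
        rw [pow_succ, Equiv.Perm.mul_apply]
      rw [hcomm]
      exact hmonk (i + 1) (by omega) (by omega)
    rw [hQ] at P₁
    exact mul_left_cancel (P₁.trans P₂.symm)
end
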